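/- PAPAL is not compact: for distinct agents a, b and atom p, the set of L_PAPAL formulas Φ = {[ψ](K_a p → K_b K_a p) : ψ ∈ L_EL⁺} ∪ {¬□⁺(K_a p → K_b K_a p)} is unsatisfiable (no pointed epistemic model satisfies all of Φ), while every finite subset of Φ is satisfiable. -/

import Mathlib

/-- An epistemic (S5) model: a nonempty set of states, an equivalence
relation for each agent, and a valuation of atoms. -/
structure EpiModel (A P : Type) where
  S : Type
  ne : Nonempty S
  rel : A → S → S → Prop
  equiv : ∀ a, Equivalence (rel a)
  val : P → Set S

/-- Positive formulas L_EL⁺ : p | ¬p | ∧ | ∨ | K_a. -/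
inductive PosForm (A P : Type) where
  | atom : P → PosForm A P
  | natom : P → PosForm A P
  | and : PosForm A P → PosForm A P → PosForm A P
  | or : PosForm A P → PosForm A P → PosForm A P
  | know : A → PosForm A P → PosForm A P

/-- Satisfaction of a positive formula, relativized to a current domain `D`
(representing the submodel of `M` induced by `D`). -/
def PosForm.sat {A P : Type} (M : EpiModel A P) : PosForm A P → Set M.S → M.S → Prop
  | .atom p, _, s => s ∈ M.val p
  | .natom p, _, s => s ∉ M.val p
  | .and φ ψ, D, s => PosForm.sat M φ D s ∧ PosForm.sat M ψ D s
  | .or φ ψ, D, s => PosForm.sat M φ D s ∨ PosForm.sat M ψ D s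
  | .know a φ, D, s => ∀ t, M.rel a s t → t ∈ D → PosForm.sat M φ D t

/-- The language L_PAPAL : atoms, ¬, ∧, K_a, announcements [ψ]φ and the
positive arbitrary-announcement quantifier □⁺. -/
inductive Form (A P : Type) where
  | atom : P → Form A P
  | neg : Form A P → Form A P
  | and : Form A P → Form A P → Form A P
  | know : A → Form A P → Form A P
  | ann : Form A P → Form A P → Form A P
  | pbox : Form A P → Form A P

/-- Satisfaction, relativized to a current domain `D`: `Form.sat M φ D s`
means that φ holds at state `s` of the restriction of `M` to `D`.
Announcement `[ψ]φ` further restricts the domain to the states of `D`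
satisfying ψ; `□⁺φ` quantifies over announcements of positive formulas. -/
def Form.sat {A P : Type} (M : EpiModel A P) : Form A P → Set M.S → M.S → Prop
  | .atom p, _, s => s ∈ M.val p
  | .neg φ, D, s => ¬ Form.sat M φ D s
  | .and φ ψ, D, s => Form.sat M φ D s ∧ Form.sat M ψ D s
  | .know a φ, D, s => ∀ t, M.rel a s t → t ∈ D → Form.sat M φ D t
  | .ann ψ φ, D, s => Form.sat M ψ D s → Form.sat M φ {t | t ∈ D ∧ Form.sat M ψ D t} s
  | .pbox φ, D, s => ∀ χ : PosForm A P, PosForm.sat M χ D s →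
      Form.sat M φ {t | t ∈ D ∧ PosForm.sat M χ D t} s

/-- Truth at a pointed model `M_s`. -/
def Sat {A P : Type} (M : EpiModel A P) (s : M.S) (φ : Form A P) : Prop :=
  Form.sat M φ Set.univ s

def Form.or {A P : Type} (φ ψ : Form A P) : Form A P := .neg (.and (.neg φ) (.neg ψ))
def Form.imp {A P : Type} (φ ψ : Form A P) : Form A P := Form.or (.neg φ) ψ
def Form.iff {A P : Type} (φ ψ : Form A P) : Form A P := .and (Form.imp φ ψ) (Form.imp ψ φ)
def Form.pdia {A P : Type} (φ : Form A P) : Form A P := .neg (.pbox (.neg φ))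
def Form.lknow {A P : Type} (a : A) (φ : Form A P) : Form A P := .neg (.know a (.neg φ))

/-- Validity on the class S5 of all epistemic models. -/
def Valid (A P : Type) (φ : Form A P) : Prop :=
  ∀ (M : EpiModel A P) (s : M.S), Sat M s φ

/-- Embedding of positive formulas into L_PAPAL. -/
def PosForm.toForm {A P : Type} : PosForm A P → Form A P
  | .atom p => .atom p
  | .natom p => .neg (.atom p)
  | .and φ ψ => .and (PosForm.toForm φ) (PosForm.toForm ψ)
  | .or φ ψ => Form.or (PosForm.toForm φ) (PosForm.toForm ψ)
  | .know a φ => .know a (PosForm.toForm φ)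

/-- The formula `K_a p → K_b K_a p`. -/
def mooreLike {A P : Type} (a b : A) (p : P) : Form A P :=
  Form.imp (.know a (.atom p)) (.know b (.know a (.atom p)))

/-- The set Φ = {[ψ](K_a p → K_b K_a p) : ψ ∈ L_EL⁺} ∪ {¬□⁺(K_a p → K_b K_a p)}. -/
def PhiSet {A P : Type} (a b : A) (p : P) : Set (Form A P) :=
  {f | ∃ ψ : PosForm A P, f = .ann (PosForm.toForm ψ) (mooreLike a b p)} ∪
    {.neg (.pbox (mooreLike a b p))}


namespace Aux
variable {A P : Type}

lemma toForm_sat (M : EpiModel A P) (φ : PosForm A P) (D : Set M.S) (s : M.S) :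
    Form.sat M φ.toForm D s ↔ PosForm.sat M φ D s := by
  induction φ generalizing D s with
  | atom q => simp [PosForm.toForm, Form.sat, PosForm.sat]
  | natom q => simp [PosForm.toForm, Form.sat, PosForm.sat]
  | and φ ψ ih1 ih2 => simp [PosForm.toForm, Form.sat, PosForm.sat, ih1, ih2]
  | or φ ψ ih1 ih2 =>
      simp only [PosForm.toForm, Form.or, Form.sat, PosForm.sat, ih1, ih2]
      tauto
  | know c φ ih => simp [PosForm.toForm, Form.sat, PosForm.sat, ih]

lemma sat_imp (M : EpiModel A P) (φ ψ : Form A P) (D : Set M.S) (s : M.S) :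
    Form.sat M (Form.imp φ ψ) D s ↔ (Form.sat M φ D s → Form.sat M ψ D s) := by
  simp only [Form.imp, Form.or, Form.sat]
  tauto

/-- modal depth of a positive formula -/
def pdepth : PosForm A P → ℕ
  | .atom _ => 0
  | .natom _ => 0
  | .and φ ψ => max (pdepth φ) (pdepth ψ)
  | .or φ ψ => max (pdepth φ) (pdepth ψ)
  | .know _ φ => pdepth φ + 1

/-- modal depth of a general formula -/
def fdepth : Form A P → ℕ
  | .atom _ => 0
  | .neg φ => fdepth φ
  | .and φ ψ => max (fdepth φ) (fdepth ψ)
  | .know _ φ => fdepth φ + 1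
  | .ann φ ψ => max (fdepth φ) (fdepth ψ)
  | .pbox φ => fdepth φ

lemma fdepth_toForm (φ : PosForm A P) : fdepth φ.toForm = pdepth φ := by
  induction φ <;> simp [PosForm.toForm, Form.or, fdepth, pdepth, *]

/-- bounded positive simulation -/
def Sim (M : EpiModel A P) : ℕ → M.S → M.S → Prop
  | 0 => fun x y => ∀ q, x ∈ M.val q ↔ y ∈ M.val q
  | k+1 => fun x y => (∀ q, x ∈ M.val q ↔ y ∈ M.val q) ∧
      ∀ c (y' : M.S), M.rel c y y' → ∃ x', M.rel c x x' ∧ Sim M k x' y'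

lemma Sim.atoms {M : EpiModel A P} {k : ℕ} {x y : M.S} (h : Sim M k x y) :
    ∀ q, x ∈ M.val q ↔ y ∈ M.val q := by
  cases k with
  | zero => exact h
  | succ k => exact h.1

lemma Sim.mono {M : EpiModel A P} : ∀ {k : ℕ} {x y : M.S}, Sim M (k+1) x y → Sim M k x y
  | 0, _, _, h => h.1
  | (k+1), _, _, h =>
    ⟨h.1, fun c y' hr => by
      obtain ⟨x', hx, hs⟩ := h.2 c y' hr
      exact ⟨x', hx, hs.mono⟩⟩

lemma sim_of_le {M : EpiModel A P} {k m : ℕ} {x y : M.S} (h : k ≤ m) (hs : Sim M m x y) :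
    Sim M k x y := by
  induction m with
  | zero => rw [Nat.le_zero.mp h]; exact hs
  | succ n ih =>
      rcases Nat.lt_or_ge k (n+1) with h' | h'
      · exact ih (Nat.lt_succ_iff.mp h') hs.mono
      · rw [le_antisymm h h']; exact hs

lemma sim_sat (M : EpiModel A P) :
    ∀ (φ : PosForm A P) {x y : M.S}, Sim M (pdepth φ) x y →
      PosForm.sat M φ Set.univ x → PosForm.sat M φ Set.univ y := by
  intro φ
  induction φ with
  | atom q => intro x y hs hx; exact (hs.atoms q).1 hx
  | natom q => intro x y hs hx; exact fun h => hx ((hs.atoms q).2 h)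
  | and φ ψ ih1 ih2 =>
      intro x y hs hx
      exact ⟨ih1 (sim_of_le (le_max_left _ _) hs) hx.1,
             ih2 (sim_of_le (le_max_right _ _) hs) hx.2⟩
  | or φ ψ ih1 ih2 =>
      intro x y hs hx
      rcases hx with hx | hx
      · exact Or.inl (ih1 (sim_of_le (le_max_left _ _) hs) hx)
      · exact Or.inr (ih2 (sim_of_le (le_max_right _ _) hs) hx)
  | know c φ ih =>
      intro x y hs hx y' hr _
      obtain ⟨x', hx', hs'⟩ := hs.2 c y' hr
      exact ih hs' (hx x' hx' trivial)


/-! ### The chain model -/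

inductive St where
  | S | T | U | S0
  | W (j : ℕ)
deriving DecidableEq

def aRep (m : ℕ) : St → St
  | .S => .S
  | .T => .T
  | .U => .T
  | .S0 => .S0
  | .W j => if j = 2*m then .S else if j < 2*m then .W (2*(j/2)) else .W j

def bRep (m : ℕ) : St → St
  | .S => .S
  | .T => .S
  | .U => .U
  | .S0 => .W 0
  | .W j => if j = 0 then .W 0 else if j ≤ 2*m then .W (2*((j-1)/2)+1) else .W j

open Classical in
noncomputable def repf (a b : A) (m : ℕ) (c : A) : St → St :=
  if c = a then aRep m else if c = b then bRep m else id

open Classical in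
noncomputable def Mod (a b : A) (p : P) (m : ℕ) : EpiModel A P where
  S := St
  ne := ⟨.S⟩
  rel c x y := repf a b m c x = repf a b m c y
  equiv _ := ⟨fun _ => rfl, Eq.symm, Eq.trans⟩
  val q := if q = p then {.S, .T, .S0} else ∅

section ModelFacts
variable {a b : A} {p : P} {m : ℕ}

lemma repf_a : repf a b m a = aRep m := if_pos rfl

lemma repf_b (hab : a ≠ b) : repf a b m b = bRep m := by
  rw [repf, if_neg (Ne.symm hab), if_pos rfl]

lemma repf_other {c : A} (h1 : c ≠ a) (h2 : c ≠ b) : repf a b m c = id := by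
  rw [repf, if_neg h1, if_neg h2]

lemma rel_a_iff {x y : St} : (Mod a b p m).rel a x y ↔ aRep m x = aRep m y := by
  show repf a b m a x = repf a b m a y ↔ _
  rw [repf_a]

lemma rel_b_iff (hab : a ≠ b) {x y : St} :
    (Mod a b p m).rel b x y ↔ bRep m x = bRep m y := by
  show repf a b m b x = repf a b m b y ↔ _
  rw [repf_b hab]

lemma rel_other_iff {c : A} (h1 : c ≠ a) (h2 : c ≠ b) {x y : St} :
    (Mod a b p m).rel c x y ↔ x = y := by
  show repf a b m c x = repf a b m c y ↔ _
  rw [repf_other h1 h2]; simp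

lemma mem_val_iff {q : P} {x : St} :
    x ∈ (Mod a b p m).val q ↔ (q = p ∧ (x = .S ∨ x = .T ∨ x = .S0)) := by
  by_cases h : q = p <;> simp [Mod, h]
  · exact Iff.rfl
  · exact fun h => h

lemma S_mem_val : (St.S : St) ∈ (Mod a b p m).val p := by simp [mem_val_iff]
lemma T_mem_val : (St.T : St) ∈ (Mod a b p m).val p := by simp [mem_val_iff]
lemma U_not_mem_val {q : P} : (St.U : St) ∉ (Mod a b p m).val q := by simp [mem_val_iff]
lemma W_not_mem_val {q : P} {j : ℕ} : (St.W j : St) ∉ (Mod a b p m).val q := by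
  simp [mem_val_iff]

/- computations of the representatives -/
lemma aRep_W2m : aRep m (.W (2*m)) = .S := by simp [aRep]
lemma aRep_Wlt {j : ℕ} (h : j < 2*m) : aRep m (.W j) = .W (2*(j/2)) := by
  simp only [aRep]; rw [if_neg (by omega), if_pos h]
lemma bRep_W {j : ℕ} (h1 : 1 ≤ j) (h2 : j ≤ 2*m) :
    bRep m (.W j) = .W (2*((j-1)/2)+1) := by
  simp only [bRep]; rw [if_neg (by omega), if_pos h2]

/- preimage characterizations -/
lemma aRep_eq_S {x : St} (h : aRep m x = .S) : x = .S ∨ x = .W (2*m) := by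
  cases x with
  | S => exact Or.inl rfl
  | T => simp [aRep] at h
  | U => simp [aRep] at h
  | S0 => simp [aRep] at h
  | W j =>
      right
      simp only [aRep] at h
      rcases Nat.lt_trichotomy j (2*m) with hl | he | hg
      · rw [if_neg (by omega), if_pos hl] at h; simp at h
      · rw [he]
      · rw [if_neg (by omega), if_neg (by omega)] at h; simp at h

lemma aRep_eq_T {x : St} (h : aRep m x = .T) : x = .T ∨ x = .U := by
  cases x with
  | S => simp [aRep] at h
  | T => exact Or.inl rfl
  | U => exact Or.inr rfl
  | S0 => simp [aRep] at h
  | W j =>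
      simp only [aRep] at h
      rcases Nat.lt_trichotomy j (2*m) with hl | he | hg
      · rw [if_neg (by omega), if_pos hl] at h; simp at h
      · rw [if_pos he] at h; simp at h
      · rw [if_neg (by omega), if_neg (by omega)] at h; simp at h

lemma bRep_eq_S {x : St} (h : bRep m x = .S) : x = .S ∨ x = .T := by
  cases x with
  | S => exact Or.inl rfl
  | T => exact Or.inr rfl
  | U => simp [bRep] at h
  | S0 => simp [bRep] at h
  | W j =>
      simp only [bRep] at h
      rcases Nat.lt_trichotomy j 0 with hl | he | hg
      · omega
      · rw [if_pos he] at h; simp at h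
      · rcases le_or_gt j (2*m) with hle | hgt
        · rw [if_neg (by omega), if_pos hle] at h; simp at h
        · rw [if_neg (by omega), if_neg (by omega)] at h; simp at h

lemma bRep_eq_U {x : St} (h : bRep m x = .U) : x = .U := by
  cases x with
  | S => simp [bRep] at h
  | T => simp [bRep] at h
  | U => rfl
  | S0 => simp [bRep] at h
  | W j =>
      simp only [bRep] at h
      rcases Nat.lt_trichotomy j 0 with hl | he | hg
      · omega
      · rw [if_pos he] at h; simp at h
      · rcases le_or_gt j (2*m) with hle | hgt
        · rw [if_neg (by omega), if_pos hle] at h; simp at h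
        · rw [if_neg (by omega), if_neg (by omega)] at h; simp at h

lemma aRep_eq_W {x : St} {j : ℕ} (hj : j < 2*m) (h : aRep m x = .W (2*(j/2))) :
    ∃ j', x = .W j' ∧ j ≤ j' + 1 ∧ j' ≤ 2*m := by
  cases x with
  | S => simp [aRep] at h
  | T => simp [aRep] at h
  | U => simp [aRep] at h
  | S0 => simp [aRep] at h
  | W j' =>
      refine ⟨j', rfl, ?_⟩
      simp only [aRep] at h
      rcases Nat.lt_trichotomy j' (2*m) with hl | he | hg
      · rw [if_neg (by omega), if_pos hl] at h; simp only [St.W.injEq] at h; omega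
      · rw [if_pos he] at h; simp at h
      · rw [if_neg (by omega), if_neg (by omega)] at h
        simp only [St.W.injEq] at h; omega

lemma bRep_eq_W {x : St} {j : ℕ} (h1 : 1 ≤ j) (hj : j ≤ 2*m)
    (h : bRep m x = .W (2*((j-1)/2)+1)) :
    ∃ j', x = .W j' ∧ j ≤ j' + 1 ∧ j' ≤ 2*m := by
  cases x with
  | S => simp [bRep] at h
  | T => simp [bRep] at h
  | U => simp [bRep] at h
  | S0 => simp only [bRep, St.W.injEq] at h; omega
  | W j' =>
      refine ⟨j', rfl, ?_⟩
      simp only [bRep] at h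
      rcases Nat.lt_trichotomy j' 0 with hl | he | hg
      · omega
      · rw [if_pos he] at h; simp only [St.W.injEq] at h; omega
      · rcases le_or_gt j' (2*m) with hle | hgt
        · rw [if_neg (by omega), if_pos hle] at h; simp only [St.W.injEq] at h; omega
        · rw [if_neg (by omega), if_neg (by omega)] at h
          simp only [St.W.injEq] at h; omega

/- positive relation facts -/
lemma rel_refl (c : A) (x : St) : (Mod a b p m).rel c x x := rfl

lemma rel_a_S_W2m : (Mod a b p m).rel a .S (.W (2*m)) := by
  rw [rel_a_iff, aRep_W2m]; rfl

lemma rel_b_S_T (hab : a ≠ b) : (Mod a b p m).rel b .S .T := by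
  rw [rel_b_iff hab]; rfl

lemma rel_a_T_U : (Mod a b p m).rel a .T .U := by
  rw [rel_a_iff]; rfl

lemma rel_b_W0_S0 (hab : a ≠ b) : (Mod a b p m).rel b (.W 0) .S0 := by
  rw [rel_b_iff hab]; simp [bRep]

lemma rel_link (hab : a ≠ b) {j : ℕ} (hj : j + 1 ≤ 2*m) :
    (Mod a b p m).rel (if Even j then a else b) (.W (j+1)) (.W j) := by
  by_cases he : Even j
  · rw [if_pos he, rel_a_iff]
    have hj1 : j + 1 < 2*m := by
      rcases he with ⟨r, hr⟩; omega
    rw [aRep_Wlt hj1, aRep_Wlt (by omega)]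
    rcases he with ⟨r, hr⟩
    simp only [St.W.injEq]; omega
  · rw [if_neg he, rel_b_iff hab]
    have ho : j % 2 = 1 := Nat.odd_iff.mp (Nat.not_even_iff_odd.mp he)
    rw [bRep_W (j := j+1) (by omega) (by omega), bRep_W (j := j) (by omega) (by omega)]
    simp only [St.W.injEq]; omega

end ModelFacts


section KeySim
variable {a b : A} {p : P} {m : ℕ}

lemma S0_mem_val : (St.S0 : St) ∈ (Mod a b p m).val p := by simp [mem_val_iff]

lemma rel_a_U_T : (Mod a b p m).rel a .U .T := by rw [rel_a_iff]; rfl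

lemma atoms_UW {j : ℕ} :
    ∀ q, (St.U : St) ∈ (Mod a b p m).val q ↔ (St.W j : St) ∈ (Mod a b p m).val q := by
  intro q; simp [mem_val_iff]

lemma atoms_TS :
    ∀ q, (St.T : St) ∈ (Mod a b p m).val q ↔ (St.S : St) ∈ (Mod a b p m).val q := by
  intro q; simp [mem_val_iff]

lemma key (hab : a ≠ b) : ∀ k : ℕ,
    (∀ j, k ≤ j → j ≤ 2*m → Sim (Mod a b p m) k St.U (St.W j)) ∧
    ((k ≤ 2*m) → Sim (Mod a b p m) k St.T St.S) ∧
    (∀ x : St, Sim (Mod a b p m) k x x) := by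
  intro k
  induction k with
  | zero =>
      exact ⟨fun j _ _ => atoms_UW, fun _ => atoms_TS, fun x q => Iff.rfl⟩
  | succ k ih =>
      obtain ⟨ih1, ih2, ih3⟩ := ih
      refine ⟨?_, ?_, fun x => ⟨fun q => Iff.rfl, fun c y' hr => ⟨y', hr, ih3 y'⟩⟩⟩
      · intro j hkj hj2m
        refine ⟨atoms_UW, ?_⟩
        intro c y' hr
        by_cases hca : c = a
        · subst hca
          replace hr := rel_a_iff.1 hr
          rcases eq_or_lt_of_le hj2m with heq | hlt
          · subst heq
            rw [aRep_W2m] at hr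
            rcases aRep_eq_S hr.symm with rfl | rfl
            · exact ⟨.T, rel_a_U_T, ih2 (by omega)⟩
            · exact ⟨.U, rel_refl _ .U, ih1 (2*m) (by omega) le_rfl⟩
          · rw [aRep_Wlt hlt] at hr
            obtain ⟨j', rfl, hj1, hj2⟩ := aRep_eq_W hlt hr.symm
            exact ⟨.U, rel_refl _ .U, ih1 j' (by omega) hj2⟩
        · by_cases hcb : c = b
          · subst hcb
            replace hr := (rel_b_iff hab).1 hr
            rw [bRep_W (by omega) hj2m] at hr
            obtain ⟨j', rfl, hj1, hj2⟩ := bRep_eq_W (by omega) hj2m hr.symm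
            exact ⟨.U, rel_refl _ .U, ih1 j' (by omega) hj2⟩
          · replace hr := (rel_other_iff hca hcb).1 hr
            subst hr
            exact ⟨.U, rel_refl _ .U, ih1 j (by omega) hj2m⟩
      · intro hk2m
        refine ⟨atoms_TS, ?_⟩
        intro c y' hr
        by_cases hca : c = a
        · subst hca
          replace hr := rel_a_iff.1 hr
          have hr' : aRep m y' = .S := hr.symm
          rcases aRep_eq_S hr' with rfl | rfl
          · exact ⟨.T, rel_refl _ .T, ih2 (by omega)⟩
          · exact ⟨.U, rel_a_T_U, ih1 (2*m) (by omega) le_rfl⟩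
        · by_cases hcb : c = b
          · subst hcb
            replace hr := (rel_b_iff hab).1 hr
            have hr' : bRep m y' = .S := hr.symm
            rcases bRep_eq_S hr' with rfl | rfl
            · refine ⟨.S, ?_, ih3 .S⟩
              exact (rel_b_iff hab).2 rfl
            · exact ⟨.T, rel_refl _ .T, ih3 .T⟩
          · replace hr := (rel_other_iff hca hcb).1 hr
            subst hr
            exact ⟨.T, rel_refl _ .T, ih2 (by omega)⟩

end KeySim

/-! ### The distinguishing positive formulas -/

def delta (a b : A) (p : P) : ℕ → PosForm A P
  | 0 => .know b (.natom p)
  | (j+1) => .know (if Even j then a else b) (.or (.atom p) (delta a b p j))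

section Delta
variable {a b : A} {p : P} {m : ℕ}

lemma delta_sat_U (hab : a ≠ b) :
    ∀ j, PosForm.sat (Mod a b p m) (delta a b p j) Set.univ St.U := by
  intro j
  induction j with
  | zero =>
      intro t hrel _
      replace hrel := (rel_b_iff hab).1 hrel
      have ht : t = .U := bRep_eq_U hrel.symm
      subst ht; exact U_not_mem_val
  | succ j ihj =>
      by_cases he : Even j
      · simp only [delta, if_pos he]
        intro t hrel _
        replace hrel := rel_a_iff.1 hrel
        rcases aRep_eq_T hrel.symm with rfl | rfl
        · exact Or.inl T_mem_val
        · exact Or.inr ihj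
      · simp only [delta, if_neg he]
        intro t hrel _
        replace hrel := (rel_b_iff hab).1 hrel
        have ht : t = .U := bRep_eq_U hrel.symm
        subst ht
        exact Or.inr ihj

lemma delta_not_sat_W (hab : a ≠ b) :
    ∀ j, j ≤ 2*m → ¬ PosForm.sat (Mod a b p m) (delta a b p j) Set.univ (St.W j) := by
  intro j
  induction j with
  | zero =>
      intro _ h
      exact (h .S0 (rel_b_W0_S0 hab) trivial) S0_mem_val
  | succ j ihj =>
      intro hj h
      simp only [delta] at h
      have hlink := rel_link (p := p) hab hj
      have := h (.W j) hlink trivial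
      rcases this with hmem | hsat
      · exact W_not_mem_val hmem
      · exact ihj (by omega) hsat

end Delta


section MainLemmas
variable {a b : A} {p : P} {m : ℕ}

lemma moore_after (hab : a ≠ b) (ψ : PosForm A P) (hd : pdepth ψ ≤ 2*m)
    (D : Set St) (hD : ∀ x : St, x ∈ D ↔ PosForm.sat (Mod a b p m) ψ Set.univ x) :
    Form.sat (Mod a b p m) (mooreLike a b p) D St.S := by
  rw [mooreLike]; refine (sat_imp _ _ _ _ _).2 ?_
  intro hKa y hby hyD z haz hzD
  replace hby := (rel_b_iff hab).1 hby
  have hy : y = .S ∨ y = .T := bRep_eq_S hby.symm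
  rcases hy with rfl | rfl
  · exact hKa z haz hzD
  · replace haz := rel_a_iff.1 haz
    have hz : z = .T ∨ z = .U := aRep_eq_T haz.symm
    rcases hz with rfl | rfl
    · exact T_mem_val
    · exfalso
      have hU : PosForm.sat (Mod a b p m) ψ Set.univ .U := (hD _).1 hzD
      have hsim : Sim (Mod a b p m) (pdepth ψ) St.U (St.W (2*m)) :=
        (key hab (pdepth ψ)).1 (2*m) hd le_rfl
      have hW : PosForm.sat (Mod a b p m) ψ Set.univ (.W (2*m)) := sim_sat _ ψ hsim hU
      have hmem : (St.W (2*m) : St) ∈ D := (hD _).2 hW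
      exact W_not_mem_val (hKa _ rel_a_S_W2m hmem)

lemma negpbox (hab : a ≠ b) :
    Sat (Mod a b p m) St.S (.neg (.pbox (mooreLike a b p))) := by
  intro h
  have hs : PosForm.sat (Mod a b p m) (PosForm.or (.atom p) (delta a b p (2*m)))
      Set.univ St.S := Or.inl S_mem_val
  have h2 := h (PosForm.or (.atom p) (delta a b p (2*m))) hs
  rw [mooreLike] at h2; replace h2 := (sat_imp _ _ _ _ _).1 h2
  have hKa : Form.sat (Mod a b p m) (.know a (.atom p))
      {t | t ∈ Set.univ ∧ PosForm.sat (Mod a b p m)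
        (PosForm.or (.atom p) (delta a b p (2*m))) Set.univ t} St.S := by
    intro t hat htD
    replace hat := rel_a_iff.1 hat
    have ht : t = .S ∨ t = .W (2*m) := aRep_eq_S hat.symm
    rcases ht with rfl | rfl
    · exact S_mem_val
    · exfalso
      rcases htD.2 with hmem | hdel
      · exact W_not_mem_val hmem
      · exact delta_not_sat_W hab (2*m) le_rfl hdel
  have h3 := h2 hKa
  have hTD : (St.T : St) ∈ {t | t ∈ Set.univ ∧ PosForm.sat (Mod a b p m)
      (PosForm.or (.atom p) (delta a b p (2*m))) Set.univ t} := ⟨trivial, Or.inl T_mem_val⟩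
  have hUD : (St.U : St) ∈ {t | t ∈ Set.univ ∧ PosForm.sat (Mod a b p m)
      (PosForm.or (.atom p) (delta a b p (2*m))) Set.univ t} :=
    ⟨trivial, Or.inr (delta_sat_U hab (2*m))⟩
  exact U_not_mem_val (h3 .T (rel_b_S_T hab) hTD .U rel_a_T_U hUD)

end MainLemmas

end Aux
/-- PAPAL is not compact: the set Φ is unsatisfiable, while
every finite subset of Φ is satisfiable. -/
theorem papal_not_compact
    (A P : Type) [Countable A] [Countable P] [Infinite P]
    (a b : A) (hab : a ≠ b) (p : P) :
    (¬ ∃ (M : EpiModel A P) (s : M.S), ∀ f ∈ PhiSet a b p, Sat M s f) ∧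
    (∀ Γ : Set (Form A P), Γ ⊆ PhiSet a b p → Γ.Finite →
      ∃ (M : EpiModel A P) (s : M.S), ∀ f ∈ Γ, Sat M s f) := by
  constructor
  · rintro ⟨M, s, h⟩
    have hneg := h (.neg (.pbox (mooreLike a b p))) (Or.inr rfl)
    refine hneg ?_
    intro χ hχ
    have hann := h (.ann χ.toForm (mooreLike a b p)) (Or.inl ⟨χ, rfl⟩)
    have h2 := hann ((Aux.toForm_sat M χ _ s).2 hχ)
    have hset : {t | t ∈ (Set.univ : Set M.S) ∧ Form.sat M χ.toForm Set.univ t}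
        = {t | t ∈ (Set.univ : Set M.S) ∧ PosForm.sat M χ Set.univ t} := by
      ext t; simp [Aux.toForm_sat]
    rw [← hset]
    exact h2
  · intro Γ hsub hfin
    obtain ⟨N, hN⟩ := (hfin.image Aux.fdepth).bddAbove
    refine ⟨Aux.Mod a b p N, Aux.St.S, ?_⟩
    intro f hf
    rcases hsub hf with ⟨ψ, rfl⟩ | hf2
    · intro hψ
      have hd : Aux.pdepth ψ ≤ 2*N := by
        have h1 : Aux.fdepth (Form.ann ψ.toForm (mooreLike a b p)) ≤ N :=
          hN (Set.mem_image_of_mem _ hf)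
        have h2 : Aux.pdepth ψ ≤ Aux.fdepth (Form.ann ψ.toForm (mooreLike a b p)) := by
          rw [show Aux.fdepth (Form.ann ψ.toForm (mooreLike a b p))
              = max (Aux.fdepth ψ.toForm) (Aux.fdepth (mooreLike a b p)) from rfl,
            Aux.fdepth_toForm]
          exact le_max_left _ _
        omega
      refine Aux.moore_after hab ψ hd _ ?_
      intro x
      simp only [Set.mem_setOf_eq, Set.mem_univ, true_and, Aux.toForm_sat]
      exact Iff.rfl
    · rw [hf2]
      exact Aux.negpbox hab
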